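/- For every k ∈ ℤ≥0, the function P_{Γ,χ}f_{k,m} belongs to S_m(Γ,η,χ): it is holomorphic on ℍ, satisfies (P_{Γ,χ}f_{k,m})(γ.z)·η_γ(z)^{−2m} = χ(γ)·(P_{Γ,χ}f_{k,m})(z) for all γ ∈ Γ and z ∈ ℍ, and sup_{z∈ℍ} |(P_{Γ,χ}f_{k,m})(z)|·(Im z)^{m/2} < ∞. -/

import Mathlib

open Complex MeasureTheory Filter Topology
open scoped Real

set_option autoImplicit false

noncomputable section

/-- `SL₂(ℤ)`. -/
abbrev SL2Z := Matrix.SpecialLinearGroup (Fin 2) ℤ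

/-- The upper half-plane, as a subset of `ℂ`. -/
def UH : Set ℂ := {z : ℂ | 0 < z.im}

/-- The `(i,j)` entry of `γ ∈ SL₂(ℤ)`, as a complex number. -/
def entry (γ : SL2Z) (i j : Fin 2) : ℂ :=
  ((γ : Matrix (Fin 2) (Fin 2) ℤ) i j : ℂ)

/-- The Möbius action of `SL₂(ℤ)` on the upper half-plane (as a map on `ℂ`). -/
def act (γ : SL2Z) (z : ℂ) : ℂ :=
  (entry γ 0 0 * z + entry γ 0 1) / (entry γ 1 0 * z + entry γ 1 1)

/-- The hyperbolic measure `dv(x+iy) = dx·dy/y²` on the upper half-plane. -/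
def hypMeasure : Measure ℂ :=
  ((volume : Measure ℂ).withDensity fun z => ENNReal.ofReal (1 / z.im ^ 2)).restrict UH

/-- A multiplier system on `Γ`: holomorphic square roots `η_γ` of `z ↦ c_γ z + d_γ`
satisfying the cocycle condition. -/
structure IsMultiplierSystem (Γ : Subgroup SL2Z) (η : Γ → ℂ → ℂ) : Prop where
  holo : ∀ γ : Γ, DifferentiableOn ℂ (η γ) UH
  sq : ∀ γ : Γ, ∀ z ∈ UH, η γ z ^ 2 = entry (γ : SL2Z) 1 0 * z + entry (γ : SL2Z) 1 1
  cocycle : ∀ γ₁ γ₂ : Γ, ∀ z ∈ UH,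
    η (γ₁ * γ₂) z = η γ₁ (act (γ₂ : SL2Z) z) * η γ₂ z

/-- `χ` has finite order. -/
def HasFiniteOrderChar (Γ : Subgroup SL2Z) (χ : Γ →* ℂˣ) : Prop :=
  ∃ n : ℕ, 0 < n ∧ ∀ γ : Γ, χ γ ^ n = 1

/-- `f` is a cusp form of weight `m = 5/2 + j` for `(Γ, η, χ)`; here
`η γ z ^ (-(5 + 2j))` is the integer power `η_γ(z)^{-2m}`, and the boundedness of
`‖f‖·(Im z)^{m/2}` on the upper half-plane expresses the vanishing at all cusps. -/
def IsCuspForm (Γ : Subgroup SL2Z) (η : Γ → ℂ → ℂ) (χ : Γ →* ℂˣ) (m : ℝ) (j : ℕ)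
    (f : ℂ → ℂ) : Prop :=
  DifferentiableOn ℂ f UH ∧
  (∀ γ : Γ, ∀ z ∈ UH,
    f (act (γ : SL2Z) z) * η γ z ^ (-(5 + 2 * (j : ℤ))) = (χ γ : ℂ) * f z) ∧
  ∃ C : ℝ, ∀ z ∈ UH, ‖f z‖ * z.im ^ (m / 2) ≤ C

/-- A measurable fundamental domain for the action of `Γ` on the upper half-plane,
with respect to the hyperbolic measure. -/
def IsFundDom (Γ : Subgroup SL2Z) (F : Set ℂ) : Prop :=
  MeasurableSet F ∧ F ⊆ UH ∧
  hypMeasure (UH \ ⋃ γ : Γ, act (γ : SL2Z) '' F) = 0 ∧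
  ∀ γ : Γ, γ ≠ 1 → hypMeasure (F ∩ act (γ : SL2Z) '' F) = 0

/-- `f_{k,m}(z) = (2i)^m (z-i)^k / (z+i)^{m+k}` (principal powers). -/
def fkm (m : ℝ) (k : ℕ) (z : ℂ) : ℂ :=
  (2 * I) ^ (m : ℂ) * (z - I) ^ k / (z + I) ^ ((m : ℂ) + (k : ℂ))

/-- The term indexed by `γ` of the Poincaré series `P_{Γ,χ} f_{k,m}`;
`η γ z ^ (-(5 + 2j))` is the integer power `η_γ(z)^{-2m}` for `m = 5/2 + j`. -/
def PTerm (Γ : Subgroup SL2Z) (η : Γ → ℂ → ℂ) (χ : Γ →* ℂˣ) (m : ℝ) (j : ℕ) (k : ℕ)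
    (γ : Γ) (z : ℂ) : ℂ :=
  (starRingEnd ℂ) (χ γ : ℂ) * fkm m k (act (γ : SL2Z) z) * η γ z ^ (-(5 + 2 * (j : ℤ)))

/-- The Poincaré series `P_{Γ,χ} f_{k,m}`. -/
def PoincareP (Γ : Subgroup SL2Z) (η : Γ → ℂ → ℂ) (χ : Γ →* ℂˣ) (m : ℝ) (j : ℕ) (k : ℕ)
    (z : ℂ) : ℂ :=
  ∑' γ : Γ, PTerm Γ η χ m j k γ z

open scoped ENNReal NNReal

/-- Compatibility: the complex absolute value, as an absolute value. -/
def Complex.abs : AbsoluteValue ℂ ℝ := NormedField.toAbsoluteValue ℂ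

lemma Complex.norm_eq_abs (z : ℂ) : ‖z‖ = Complex.abs z := rfl

lemma Complex.im_le_abs (z : ℂ) : z.im ≤ Complex.abs z := Complex.im_le_norm z

lemma Complex.abs_im_le_abs (z : ℂ) : |z.im| ≤ Complex.abs z := Complex.abs_im_le_norm z

lemma Complex.sq_abs (z : ℂ) : Complex.abs z ^ 2 = Complex.normSq z := Complex.sq_norm z

lemma Complex.normSq_eq_abs (z : ℂ) : Complex.normSq z = Complex.abs z ^ 2 :=
  Complex.normSq_eq_norm_sq z

lemma Complex.abs_apply (z : ℂ) : Complex.abs z = Real.sqrt (Complex.normSq z) := rfl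

lemma Complex.abs_cpow_of_ne_zero {z : ℂ} (hz : z ≠ 0) (w : ℂ) :
    Complex.abs (z ^ w) = Complex.abs z ^ w.re / Real.exp (Complex.arg z * w.im) :=
  Complex.norm_cpow_of_ne_zero hz w

@[simp] lemma Complex.abs_two : Complex.abs 2 = 2 := Complex.norm_two

@[simp] lemma Complex.abs_I : Complex.abs I = 1 := Complex.norm_I

namespace PoincareAux

/-- Denominator `c z + d`. -/
def Dz (γ : SL2Z) (z : ℂ) : ℂ := entry γ 1 0 * z + entry γ 1 1

/-- Numerator `a z + b`. -/
def Nz (γ : SL2Z) (z : ℂ) : ℂ := entry γ 0 0 * z + entry γ 0 1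

/-- First column as complex number `a + c i`. -/
def uC (γ : SL2Z) : ℂ := entry γ 0 0 + entry γ 1 0 * I

/-- Second column as complex number `b + d i`. -/
def vC (γ : SL2Z) : ℂ := entry γ 0 1 + entry γ 1 1 * I

/-- The combination `u z + v = (a z + b) + i (c z + d)`. -/
def Lz (γ : SL2Z) (z : ℂ) : ℂ := uC γ * z + vC γ

lemma act_eq (γ : SL2Z) (z : ℂ) : act γ z = Nz γ z / Dz γ z := rfl

lemma detZ (γ : SL2Z) : γ.1 0 0 * γ.1 1 1 - γ.1 0 1 * γ.1 1 0 = 1 := by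
  have h := γ.2
  rwa [Matrix.det_fin_two] at h

lemma detR (γ : SL2Z) : (γ.1 0 0 : ℝ) * (γ.1 1 1 : ℝ) - (γ.1 0 1 : ℝ) * (γ.1 1 0 : ℝ) = 1 := by
  exact_mod_cast congrArg (fun n : ℤ => (n : ℝ)) (detZ γ)

lemma Dz_im (γ : SL2Z) (z : ℂ) : (Dz γ z).im = (γ.1 1 0 : ℝ) * z.im := by
  simp [Dz, entry]

lemma Dz_re (γ : SL2Z) (z : ℂ) : (Dz γ z).re = (γ.1 1 0 : ℝ) * z.re + (γ.1 1 1 : ℝ) := by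
  simp [Dz, entry]

lemma Dz_ne_zero (γ : SL2Z) {z : ℂ} (hz : 0 < z.im) : Dz γ z ≠ 0 := by
  intro h
  have him : (γ.1 1 0 : ℝ) * z.im = 0 := by rw [← Dz_im γ z, h]; simp
  have hc : (γ.1 1 0 : ℝ) = 0 := by
    rcases mul_eq_zero.1 him with h' | h'
    · exact h'
    · exact absurd h' hz.ne'
  have hre : (γ.1 1 0 : ℝ) * z.re + (γ.1 1 1 : ℝ) = 0 := by rw [← Dz_re γ z, h]; simp
  have hd : (γ.1 1 1 : ℝ) = 0 := by rw [hc] at hre; linarith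
  have hdet := detR γ
  rw [hc, hd] at hdet
  norm_num at hdet

lemma act_im (γ : SL2Z) {z : ℂ} (hz : 0 < z.im) :
    (act γ z).im = z.im / Complex.normSq (Dz γ z) := by
  rw [act_eq, Complex.div_im, div_sub_div_same]
  congr 1
  simp only [Nz, Dz, entry, Complex.add_im, Complex.add_re, Complex.mul_re, Complex.mul_im,
    Complex.intCast_re, Complex.intCast_im]
  ring_nf
  linear_combination z.im * detR γ

lemma act_mem (γ : SL2Z) {z : ℂ} (hz : 0 < z.im) : 0 < (act γ z).im := by
  rw [act_im γ hz]
  exact div_pos hz (Complex.normSq_pos.2 (Dz_ne_zero γ hz))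

lemma entry_mul (γ δ : SL2Z) (i j : Fin 2) :
    entry (γ * δ) i j = entry γ i 0 * entry δ 0 j + entry γ i 1 * entry δ 1 j := by
  simp only [entry, Matrix.SpecialLinearGroup.coe_mul, Matrix.mul_apply, Fin.sum_univ_two]
  push_cast
  ring

lemma Nz_comp (γ δ : SL2Z) {z : ℂ} (hz : 0 < z.im) :
    Nz γ (act δ z) * Dz δ z = Nz (γ * δ) z := by
  have hD := Dz_ne_zero δ hz
  rw [Nz, act_eq, add_mul, mul_assoc, div_mul_cancel₀ _ hD]
  simp only [Nz, Dz, entry_mul]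
  ring

lemma Dz_comp (γ δ : SL2Z) {z : ℂ} (hz : 0 < z.im) :
    Dz γ (act δ z) * Dz δ z = Dz (γ * δ) z := by
  have hD := Dz_ne_zero δ hz
  rw [Dz, act_eq, add_mul, mul_assoc, div_mul_cancel₀ _ hD]
  simp only [Nz, Dz, entry_mul]
  ring

lemma act_act (γ δ : SL2Z) {z : ℂ} (hz : 0 < z.im) :
    act γ (act δ z) = act (γ * δ) z := by
  have hDδ := Dz_ne_zero δ hz
  rw [act_eq γ, act_eq (γ * δ), ← Nz_comp γ δ hz, ← Dz_comp γ δ hz,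
    mul_div_mul_right _ _ hDδ]

lemma Lz_eq (γ : SL2Z) (z : ℂ) : Lz γ z = Nz γ z + Dz γ z * I := by
  simp only [Lz, Nz, Dz, uC, vC]
  ring

lemma act_add_I (γ : SL2Z) {z : ℂ} (hz : 0 < z.im) :
    act γ z + I = Lz γ z / Dz γ z := by
  have hD := Dz_ne_zero γ hz
  rw [act_eq, Lz_eq]
  field_simp

lemma Lz_comp (γ δ : SL2Z) {z : ℂ} (hz : 0 < z.im) :
    Lz γ (act δ z) * Dz δ z = Lz (γ * δ) z := by
  rw [Lz_eq, Lz_eq, add_mul, Nz_comp γ δ hz, mul_right_comm, Dz_comp γ δ hz]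

lemma Lz_ne_zero (γ : SL2Z) {z : ℂ} (hz : 0 < z.im) : Lz γ z ≠ 0 := by
  have hD := Dz_ne_zero γ hz
  have h : Lz γ z = (act γ z + I) * Dz γ z := by
    rw [act_add_I γ hz, div_mul_cancel₀ _ hD]
  rw [h]
  apply mul_ne_zero _ hD
  intro h0
  have : (act γ z + I).im = 0 := by rw [h0]; simp
  simp only [Complex.add_im, Complex.I_im] at this
  have := act_mem γ hz
  linarith

lemma uC_re (γ : SL2Z) : (uC γ).re = (γ.1 0 0 : ℝ) := by simp [uC, entry]

lemma uC_im (γ : SL2Z) : (uC γ).im = (γ.1 1 0 : ℝ) := by simp [uC, entry]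

lemma uC_ne_zero (γ : SL2Z) : uC γ ≠ 0 := by
  intro h
  have ha : (γ.1 0 0 : ℝ) = 0 := by rw [← uC_re γ, h]; simp
  have hc : (γ.1 1 0 : ℝ) = 0 := by rw [← uC_im γ, h]; simp
  have hdet := detR γ
  rw [ha, hc] at hdet
  norm_num at hdet

lemma im_vC_div_uC (γ : SL2Z) :
    (vC γ / uC γ).im = 1 / Complex.normSq (uC γ) := by
  rw [Complex.div_im, uC_re, uC_im]
  have hv_re : (vC γ).re = (γ.1 0 1 : ℝ) := by simp [vC, entry]
  have hv_im : (vC γ).im = (γ.1 1 1 : ℝ) := by simp [vC, entry]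
  rw [hv_re, hv_im, div_sub_div_same]
  congr 1
  linear_combination detR γ

lemma Lz_factor (γ : SL2Z) (z : ℂ) : Lz γ z = uC γ * (z + vC γ / uC γ) := by
  have := uC_ne_zero γ
  rw [Lz]
  field_simp

lemma abs_uC_mul_im_le (γ : SL2Z) {z : ℂ} (hz : 0 < z.im) :
    Complex.abs (uC γ) * z.im ≤ Complex.abs (Lz γ z) := by
  rw [Lz_factor, map_mul]
  refine mul_le_mul_of_nonneg_left ?_ (Complex.abs.nonneg _)
  calc z.im ≤ (z + vC γ / uC γ).im := by
        rw [Complex.add_im, im_vC_div_uC]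
        have h : 0 < Complex.normSq (uC γ) := Complex.normSq_pos.2 (uC_ne_zero γ)
        have : 0 < 1 / Complex.normSq (uC γ) := by positivity
        linarith
    _ ≤ Complex.abs (z + vC γ / uC γ) := Complex.im_le_abs _

end PoincareAux
/-! ### Coset decomposition along powers of `T` -/

/-- The subgroup generated by `T = [[1,1],[0,1]]`. -/
def TS : Subgroup SL2Z := Subgroup.zpowers ModularGroup.T

lemma T_pow_coe (s : ℤ) : ((ModularGroup.T ^ s : SL2Z) : Matrix (Fin 2) (Fin 2) ℤ)
    = !![1, s; 0, 1] := ModularGroup.coe_T_zpow s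

lemma T_zpow_inj : Function.Injective fun s : ℤ => (ModularGroup.T : SL2Z) ^ s := by
  intro s t h
  have h2 := congrArg (fun g : SL2Z => (g : Matrix (Fin 2) (Fin 2) ℤ) 0 1) h
  simpa [T_pow_coe] using h2

lemma T_zpow_mem (s : ℤ) : (ModularGroup.T : SL2Z) ^ s ∈ TS :=
  Subgroup.zpow_mem TS (Subgroup.mem_zpowers _) s

lemma coe_mul_apply (γ δ : SL2Z) (i j : Fin 2) :
    ((γ * δ : SL2Z) : Matrix (Fin 2) (Fin 2) ℤ) i j
      = γ.1 i 0 * δ.1 0 j + γ.1 i 1 * δ.1 1 j := by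
  rw [Matrix.SpecialLinearGroup.coe_mul, Matrix.mul_apply, Fin.sum_univ_two]

/-- The parametrization of `SL₂(ℤ)` by (coset of `TS`) × ℤ. -/
noncomputable def cosetEquiv : (SL2Z ⧸ TS) × ℤ ≃ SL2Z := by
  refine Equiv.ofBijective (fun p => Quotient.out p.1 * ModularGroup.T ^ p.2) ⟨?_, ?_⟩
  · rintro ⟨q1, s1⟩ ⟨q2, s2⟩ h
    simp only at h
    have e1 : (QuotientGroup.mk (Quotient.out q1 * ModularGroup.T ^ s1) : SL2Z ⧸ TS) = q1 := by
      rw [QuotientGroup.mk_mul_of_mem _ (T_zpow_mem s1), QuotientGroup.out_eq']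
    have e2 : (QuotientGroup.mk (Quotient.out q2 * ModularGroup.T ^ s2) : SL2Z ⧸ TS) = q2 := by
      rw [QuotientGroup.mk_mul_of_mem _ (T_zpow_mem s2), QuotientGroup.out_eq']
    have hq : q1 = q2 := by rw [← e1, ← e2, h]
    subst hq
    have hs : (ModularGroup.T : SL2Z) ^ s1 = ModularGroup.T ^ s2 := mul_left_cancel h
    rw [T_zpow_inj hs]
  · intro γ
    have h : (Quotient.out (QuotientGroup.mk (s := TS) γ))⁻¹ * γ ∈ TS := by
      rw [← QuotientGroup.eq, QuotientGroup.out_eq']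
    obtain ⟨s, hs⟩ := Subgroup.mem_zpowers_iff.1 h
    exact ⟨⟨QuotientGroup.mk γ, s⟩, by simp [hs, mul_inv_cancel_left]⟩

/-- The first column of the chosen coset representative, as `Fin 2 → ℤ`. -/
noncomputable def colMap (q : SL2Z ⧸ TS) : Fin 2 → ℤ :=
  ![(Quotient.out q).1 0 0, (Quotient.out q).1 1 0]

lemma colMap_inj : Function.Injective colMap := by
  intro q1 q2 h
  set γ := Quotient.out q1 with hγ
  set γ' := Quotient.out q2 with hγ'
  have ha : γ.1 0 0 = γ'.1 0 0 := by
    have := congrFun h 0; simpa [colMap, ← hγ, ← hγ'] using this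
  have hc : γ.1 1 0 = γ'.1 1 0 := by
    have := congrFun h 1; simpa [colMap, ← hγ, ← hγ'] using this
  set δ := γ⁻¹ * γ' with hδ
  have hγδ : γ * δ = γ' := by rw [hδ, mul_inv_cancel_left]
  have e0 : γ.1 0 0 * δ.1 0 0 + γ.1 0 1 * δ.1 1 0 = γ.1 0 0 := by
    have h2 : ((γ * δ : SL2Z) : Matrix (Fin 2) (Fin 2) ℤ) 0 0 = γ'.1 0 0 := by rw [hγδ]
    rw [coe_mul_apply] at h2
    rw [h2, ha]
  have e1 : γ.1 1 0 * δ.1 0 0 + γ.1 1 1 * δ.1 1 0 = γ.1 1 0 := by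
    have h2 : ((γ * δ : SL2Z) : Matrix (Fin 2) (Fin 2) ℤ) 1 0 = γ'.1 1 0 := by rw [hγδ]
    rw [coe_mul_apply] at h2
    rw [h2, hc]
  have hx : δ.1 0 0 = 1 := by
    linear_combination (γ.1 1 1) * e0 - (γ.1 0 1) * e1 - (δ.1 0 0 - 1) * PoincareAux.detZ γ
  have hy : δ.1 1 0 = 0 := by
    linear_combination (γ.1 0 0) * e1 - (γ.1 1 0) * e0 - (δ.1 1 0) * PoincareAux.detZ γ
  have hd : δ.1 1 1 = 1 := by
    have hdet := PoincareAux.detZ δ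
    rw [hx, hy] at hdet
    linarith
  have hδT : δ = ModularGroup.T ^ (δ.1 0 1) := by
    apply Subtype.ext
    rw [T_pow_coe]
    ext i j
    fin_cases i <;> fin_cases j <;>
      simp [hx, hy, hd]
  have hmem : δ ∈ TS := hδT ▸ T_zpow_mem (δ.1 0 1)
  have : (QuotientGroup.mk γ : SL2Z ⧸ TS) = QuotientGroup.mk γ' := QuotientGroup.eq.2 hmem
  rwa [hγ, hγ', QuotientGroup.out_eq', QuotientGroup.out_eq'] at this

open PoincareAux in
lemma Lz_mul_T (γ : SL2Z) (s : ℤ) (z : ℂ) :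
    Lz (γ * ModularGroup.T ^ s) z = Lz γ z + (s : ℂ) * uC γ := by
  have h00 : entry (γ * ModularGroup.T ^ s) 0 0 = entry γ 0 0 := by
    simp [entry, coe_mul_apply, T_pow_coe]
  have h10 : entry (γ * ModularGroup.T ^ s) 1 0 = entry γ 1 0 := by
    simp [entry, coe_mul_apply, T_pow_coe]
  have h01 : entry (γ * ModularGroup.T ^ s) 0 1 = entry γ 0 0 * s + entry γ 0 1 := by
    simp [entry, coe_mul_apply, T_pow_coe]
  have h11 : entry (γ * ModularGroup.T ^ s) 1 1 = entry γ 1 0 * s + entry γ 1 1 := by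
    simp [entry, coe_mul_apply, T_pow_coe]
  simp only [Lz, uC, vC, h00, h10, h01, h11]
  ring
/-! ### Summation estimates -/

namespace PoincareAux

/-- `∑_{t ∈ ℤ} |t|^{-m/2}`. -/
def Zconst (m : ℝ) : ℝ := ∑' t : ℤ, |(t : ℝ)| ^ (-(m / 2))

lemma Zconst_summable {m : ℝ} (hm : 2 < m) :
    Summable fun t : ℤ => |(t : ℝ)| ^ (-(m / 2)) :=
  Real.summable_abs_int_rpow (by linarith)

lemma Zconst_nonneg {m : ℝ} (hm : 2 < m) : 0 ≤ Zconst m :=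
  tsum_nonneg fun t => Real.rpow_nonneg (abs_nonneg _) _

/-- The inner sum over one coset: `∑_s |w+s|^{-m} ≤ y^{-m} + Z y^{-m/2}` when `y ≤ Im w`. -/
lemma inner_sum_le {m : ℝ} (hm : 2 < m) {w : ℂ} {y : ℝ} (hy : 0 < y) (hw : y ≤ w.im) :
    (∑' s : ℤ, ENNReal.ofReal (Complex.abs (w + (s : ℂ)) ^ (-m)))
      ≤ ENNReal.ofReal (y ^ (-m) + Zconst m * y ^ (-(m / 2))) := by
  set s₀ : ℤ := round (-w.re) with hs₀
  have him : ∀ s : ℤ, (w + (s : ℂ)).im = w.im := by intro s; simp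
  have hre : ∀ s : ℤ, (w + (s : ℂ)).re = w.re + (s : ℝ) := by intro s; simp
  -- pointwise bound
  have key : ∀ s : ℤ, ENNReal.ofReal (Complex.abs (w + (s : ℂ)) ^ (-m)) ≤
      (if s = s₀ then ENNReal.ofReal (y ^ (-m))
        else ENNReal.ofReal (y ^ (-(m / 2)) * |((s - s₀ : ℤ) : ℝ)| ^ (-(m / 2)))) := by
    intro s
    by_cases hcase : s = s₀
    · rw [if_pos hcase]
      apply ENNReal.ofReal_le_ofReal
      apply Real.rpow_le_rpow_of_nonpos hy _ (by linarith)
      calc y ≤ w.im := hw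
        _ = (w + (s : ℂ)).im := (him s).symm
        _ ≤ Complex.abs (w + (s : ℂ)) := Complex.im_le_abs _
    · rw [if_neg hcase]
      apply ENNReal.ofReal_le_ofReal
      -- |w+s|² ≥ y * |s - s₀|
      have h1 : (1 : ℝ) ≤ |((s - s₀ : ℤ) : ℝ)| := by
        have : s - s₀ ≠ 0 := sub_ne_zero.2 hcase
        have : (1 : ℤ) ≤ |s - s₀| := Int.one_le_abs (by simpa using this)
        exact_mod_cast (by push_cast; exact_mod_cast this : (1:ℝ) ≤ ((|s - s₀| : ℤ) : ℝ))
      have hround : |(-w.re) - (s₀ : ℝ)| ≤ 1 / 2 := by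
        rw [hs₀]; exact abs_sub_round (-w.re)
      have h2 : |((s - s₀ : ℤ) : ℝ)| ≤ 2 * |w.re + (s : ℝ)| := by
        have htri : |((s - s₀ : ℤ) : ℝ)| ≤ |w.re + (s : ℝ)| + |(-w.re) - (s₀ : ℝ)| := by
          push_cast
          have : ((s : ℝ) - s₀) = (w.re + s) + ((-w.re) - s₀) := by ring
          rw [this]
          exact abs_add_le _ _
        have : |((s - s₀ : ℤ) : ℝ)| ≤ |w.re + (s : ℝ)| + 1 / 2 := le_trans htri (by linarith)
        -- since 1 ≤ |s-s₀| we get |s-s₀|/2 ≤ |w.re+s|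
        nlinarith [h1]
      have hsq : y * |((s - s₀ : ℤ) : ℝ)| ≤ Complex.abs (w + (s : ℂ)) ^ 2 := by
        have habs : Complex.abs (w + (s : ℂ)) ^ 2 = (w.re + (s:ℝ)) ^ 2 + w.im ^ 2 := by
          rw [Complex.sq_abs, Complex.normSq_apply, hre, him]; ring
        have h2ab : 2 * |w.re + (s:ℝ)| * w.im ≤ (w.re + (s:ℝ)) ^ 2 + w.im ^ 2 := by
          nlinarith [sq_nonneg (|w.re + (s:ℝ)| - w.im), _root_.sq_abs (w.re + (s:ℝ))]
        have hyim : y * |((s - s₀ : ℤ) : ℝ)| ≤ 2 * |w.re + (s:ℝ)| * w.im := by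
          calc y * |((s - s₀ : ℤ) : ℝ)| ≤ w.im * (2 * |w.re + (s : ℝ)|) := by
                apply mul_le_mul hw h2 (abs_nonneg _) (by linarith)
            _ = 2 * |w.re + (s:ℝ)| * w.im := by ring
        rw [habs]; linarith
      -- conclude with rpow manipulations
      have hpos : 0 < y * |((s - s₀ : ℤ) : ℝ)| := by
        apply mul_pos hy (by linarith)
      have habs_pos : 0 < Complex.abs (w + (s : ℂ)) := by
        apply lt_of_lt_of_le hy (le_trans hw _)
        rw [← him s]; exact Complex.im_le_abs _
      calc Complex.abs (w + (s : ℂ)) ^ (-m)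
          = (Complex.abs (w + (s : ℂ)) ^ 2) ^ (-(m / 2)) := by
            rw [← Real.rpow_natCast (Complex.abs (w + (s : ℂ))) 2, ← Real.rpow_mul habs_pos.le]
            congr 1
            ring
        _ ≤ (y * |((s - s₀ : ℤ) : ℝ)|) ^ (-(m / 2)) := by
            apply Real.rpow_le_rpow_of_nonpos hpos hsq (by linarith)
        _ = y ^ (-(m / 2)) * |((s - s₀ : ℤ) : ℝ)| ^ (-(m / 2)) := by
            rw [Real.mul_rpow hy.le (abs_nonneg _)]
  calc (∑' s : ℤ, ENNReal.ofReal (Complex.abs (w + (s : ℂ)) ^ (-m)))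
      ≤ ∑' s : ℤ, (if s = s₀ then ENNReal.ofReal (y ^ (-m))
          else ENNReal.ofReal (y ^ (-(m / 2)) * |((s - s₀ : ℤ) : ℝ)| ^ (-(m / 2)))) :=
        ENNReal.tsum_le_tsum key
    _ ≤ ENNReal.ofReal (y ^ (-m)) + ∑' s : ℤ,
          ENNReal.ofReal (y ^ (-(m / 2)) * |((s - s₀ : ℤ) : ℝ)| ^ (-(m / 2))) := by
        rw [ENNReal.tsum_eq_add_tsum_ite s₀]
        simp only [if_pos rfl]
        refine add_le_add_right (ENNReal.tsum_le_tsum fun s => ?_) _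
        by_cases hcase : s = s₀
        · simp [hcase]
        · simp only [if_neg hcase]
          exact le_rfl
    _ = ENNReal.ofReal (y ^ (-m)) + ENNReal.ofReal (y ^ (-(m / 2))) * ∑' s : ℤ,
          ENNReal.ofReal (|((s - s₀ : ℤ) : ℝ)| ^ (-(m / 2))) := by
        rw [← ENNReal.tsum_mul_left]
        congr 1
        refine tsum_congr fun s => ?_
        rw [ENNReal.ofReal_mul (Real.rpow_nonneg (le_of_lt hy) _)]
    _ = ENNReal.ofReal (y ^ (-m)) + ENNReal.ofReal (y ^ (-(m / 2))) * ∑' t : ℤ,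
          ENNReal.ofReal (|(t : ℝ)| ^ (-(m / 2))) := by
        congr 1
        congr 1
        have := Equiv.tsum_eq (Equiv.subRight s₀)
          (fun t : ℤ => ENNReal.ofReal (|(t : ℝ)| ^ (-(m / 2))))
        simp only [Equiv.subRight_apply] at this
        rw [← this]
    _ = ENNReal.ofReal (y ^ (-m)) + ENNReal.ofReal (y ^ (-(m / 2))) * ENNReal.ofReal (Zconst m) := by
        rw [Zconst, ENNReal.ofReal_tsum_of_nonneg (fun t => Real.rpow_nonneg (abs_nonneg _) _)
          (Zconst_summable hm)]
    _ = ENNReal.ofReal (y ^ (-m) + Zconst m * y ^ (-(m / 2))) := by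
        rw [← ENNReal.ofReal_mul (Real.rpow_nonneg (le_of_lt hy) _), ← ENNReal.ofReal_add
          (Real.rpow_nonneg (le_of_lt hy) _)
          (mul_nonneg (Real.rpow_nonneg (le_of_lt hy) _) (Zconst_nonneg hm))]
        congr 1
        ring

end PoincareAux
namespace PoincareAux

/-- `∑_{x ∈ ℤ²} ‖x‖^{-m}` (sup norm). -/
def Econst (m : ℝ) : ℝ := ∑' x : (Fin 2 → ℤ), ‖x‖ ^ (-m)

lemma Econst_summable {m : ℝ} (hm : 2 < m) :
    Summable fun x : Fin 2 → ℤ => ‖x‖ ^ (-m) :=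
  EisensteinSeries.summable_one_div_norm_rpow hm

lemma Econst_nonneg {m : ℝ} : 0 ≤ Econst m :=
  tsum_nonneg fun x => Real.rpow_nonneg (norm_nonneg _) _

/-- The master series over `SL₂(ℤ)`. -/
def Sen (m : ℝ) (z : ℂ) : ℝ≥0∞ :=
  ∑' γ : SL2Z, ENNReal.ofReal (Complex.abs (Lz γ z) ^ (-m))

lemma abs_uC_sq (γ : SL2Z) :
    Complex.abs (uC γ) ^ 2 = ((γ.1 0 0 : ℝ)) ^ 2 + ((γ.1 1 0 : ℝ)) ^ 2 := by
  rw [Complex.sq_abs, Complex.normSq_apply, uC_re, uC_im]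
  ring

lemma colMap_norm_le (q : SL2Z ⧸ TS) : ‖colMap q‖ ≤ Complex.abs (uC (Quotient.out q)) := by
  set γ := Quotient.out q
  have h0 : |((γ.1 0 0 : ℤ) : ℝ)| ≤ Complex.abs (uC γ) := by
    rw [← Real.sqrt_sq_eq_abs, ← Real.sqrt_sq (Complex.abs.nonneg (uC γ)), abs_uC_sq]
    apply Real.sqrt_le_sqrt
    nlinarith [sq_nonneg ((γ.1 1 0 : ℝ))]
  have h1 : |((γ.1 1 0 : ℤ) : ℝ)| ≤ Complex.abs (uC γ) := by
    rw [← Real.sqrt_sq_eq_abs, ← Real.sqrt_sq (Complex.abs.nonneg (uC γ)), abs_uC_sq]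
    apply Real.sqrt_le_sqrt
    nlinarith [sq_nonneg ((γ.1 0 0 : ℝ))]
  have hnorm : ‖colMap q‖ = max |((γ.1 0 0 : ℤ) : ℝ)| |((γ.1 1 0 : ℤ) : ℝ)| := by
    rw [colMap]
    rw [EisensteinSeries.norm_eq_max_natAbs]
    simp [Nat.cast_natAbs, Nat.cast_max]
    rfl
  rw [hnorm]
  exact max_le h0 h1

lemma colMap_ne_zero (q : SL2Z ⧸ TS) : colMap q ≠ 0 := by
  intro h
  set γ := Quotient.out q
  have ha : γ.1 0 0 = 0 := by
    have := congrFun h 0; simpa [colMap] using this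
  have hc : γ.1 1 0 = 0 := by
    have := congrFun h 1; simpa [colMap] using this
  have hdet := detZ γ
  rw [ha, hc] at hdet
  simp at hdet

lemma Sen_le {m : ℝ} (hm : 2 < m) {z : ℂ} (hz : 0 < z.im) :
    Sen m z ≤ ENNReal.ofReal
      ((z.im ^ (-m) + Zconst m * z.im ^ (-(m / 2))) * Econst m) := by
  set Ψ : ℝ := z.im ^ (-m) + Zconst m * z.im ^ (-(m / 2)) with hΨdef
  have hΨ0 : 0 ≤ Ψ := by
    apply add_nonneg (Real.rpow_nonneg hz.le _)
    exact mul_nonneg (Zconst_nonneg hm) (Real.rpow_nonneg hz.le _)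
  have hstep1 : Sen m z = ∑' q : SL2Z ⧸ TS, ∑' s : ℤ,
      ENNReal.ofReal (Complex.abs (Lz (Quotient.out q * ModularGroup.T ^ s) z) ^ (-m)) := by
    rw [Sen, ← Equiv.tsum_eq cosetEquiv
      (fun γ => ENNReal.ofReal (Complex.abs (Lz γ z) ^ (-m)))]
    exact ENNReal.tsum_prod'
  have inner : ∀ q : SL2Z ⧸ TS,
      (∑' s : ℤ, ENNReal.ofReal
          (Complex.abs (Lz (Quotient.out q * ModularGroup.T ^ s) z) ^ (-m)))
        ≤ ENNReal.ofReal (Complex.abs (uC (Quotient.out q)) ^ (-m)) * ENNReal.ofReal Ψ := by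
    intro q
    set γ₀ := Quotient.out q
    have hu : uC γ₀ ≠ 0 := uC_ne_zero γ₀
    set w : ℂ := z + vC γ₀ / uC γ₀ with hwdef
    have hLs : ∀ s : ℤ, Lz (γ₀ * ModularGroup.T ^ s) z = uC γ₀ * (w + (s : ℂ)) := by
      intro s
      rw [Lz_mul_T, hwdef, Lz_factor]
      ring
    have him : z.im ≤ w.im := by
      rw [hwdef, Complex.add_im, im_vC_div_uC]
      have h : 0 < Complex.normSq (uC γ₀) := Complex.normSq_pos.2 hu
      have : 0 < 1 / Complex.normSq (uC γ₀) := by positivity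
      linarith
    calc (∑' s : ℤ, ENNReal.ofReal
            (Complex.abs (Lz (γ₀ * ModularGroup.T ^ s) z) ^ (-m)))
        = ∑' s : ℤ, ENNReal.ofReal (Complex.abs (uC γ₀) ^ (-m))
            * ENNReal.ofReal (Complex.abs (w + (s : ℂ)) ^ (-m)) := by
          refine tsum_congr fun s => ?_
          rw [hLs s, map_mul, Real.mul_rpow (Complex.abs.nonneg _) (Complex.abs.nonneg _),
            ENNReal.ofReal_mul (Real.rpow_nonneg (Complex.abs.nonneg _) _)]
      _ = ENNReal.ofReal (Complex.abs (uC γ₀) ^ (-m))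
            * ∑' s : ℤ, ENNReal.ofReal (Complex.abs (w + (s : ℂ)) ^ (-m)) :=
          ENNReal.tsum_mul_left
      _ ≤ ENNReal.ofReal (Complex.abs (uC γ₀) ^ (-m)) * ENNReal.ofReal Ψ := by
          exact mul_le_mul_right (inner_sum_le hm hz him) _
  have outer : (∑' q : SL2Z ⧸ TS, ENNReal.ofReal (Complex.abs (uC (Quotient.out q)) ^ (-m)))
      ≤ ENNReal.ofReal (Econst m) := by
    have hle : ∀ q : SL2Z ⧸ TS, ENNReal.ofReal (Complex.abs (uC (Quotient.out q)) ^ (-m))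
        ≤ ENNReal.ofReal (‖colMap q‖ ^ (-m)) := by
      intro q
      apply ENNReal.ofReal_le_ofReal
      apply Real.rpow_le_rpow_of_nonpos (norm_pos_iff.2 (colMap_ne_zero q))
        (colMap_norm_le q) (by linarith)
    calc (∑' q : SL2Z ⧸ TS, ENNReal.ofReal (Complex.abs (uC (Quotient.out q)) ^ (-m)))
        ≤ ∑' q : SL2Z ⧸ TS, ENNReal.ofReal (‖colMap q‖ ^ (-m)) := ENNReal.tsum_le_tsum hle
      _ ≤ ∑' x : (Fin 2 → ℤ), ENNReal.ofReal (‖x‖ ^ (-m)) :=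
          ENNReal.tsum_comp_le_tsum_of_injective colMap_inj _
      _ = ENNReal.ofReal (Econst m) := by
          rw [Econst, ENNReal.ofReal_tsum_of_nonneg
            (fun x => Real.rpow_nonneg (norm_nonneg _) _) (Econst_summable hm)]
  calc Sen m z = ∑' q : SL2Z ⧸ TS, ∑' s : ℤ,
        ENNReal.ofReal (Complex.abs (Lz (Quotient.out q * ModularGroup.T ^ s) z) ^ (-m)) := hstep1
    _ ≤ ∑' q : SL2Z ⧸ TS,
        ENNReal.ofReal (Complex.abs (uC (Quotient.out q)) ^ (-m)) * ENNReal.ofReal Ψ :=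
        ENNReal.tsum_le_tsum inner
    _ = (∑' q : SL2Z ⧸ TS,
        ENNReal.ofReal (Complex.abs (uC (Quotient.out q)) ^ (-m))) * ENNReal.ofReal Ψ :=
        ENNReal.tsum_mul_right
    _ ≤ ENNReal.ofReal (Econst m) * ENNReal.ofReal Ψ := mul_le_mul_left outer _
    _ = ENNReal.ofReal (Ψ * Econst m) := by
        rw [← ENNReal.ofReal_mul Econst_nonneg]
        ring_nf

lemma Sen_lt_top {m : ℝ} (hm : 2 < m) {z : ℂ} (hz : 0 < z.im) : Sen m z < ⊤ :=
  lt_of_le_of_lt (Sen_le hm hz) ENNReal.ofReal_lt_top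

/-- From finiteness of the `ℝ≥0∞` sum to real summability. -/
lemma summable_of_ofReal_tsum_ne_top {ι : Type*} {f : ι → ℝ} (h0 : ∀ i, 0 ≤ f i)
    (h : (∑' i, ENNReal.ofReal (f i)) ≠ ⊤) : Summable f := by
  have h1 : Summable fun i => Real.toNNReal (f i) := by
    apply ENNReal.tsum_coe_ne_top_iff_summable.1
    convert h using 2
    rfl
  have h2 := NNReal.summable_coe.2 h1
  refine h2.congr fun i => ?_
  rw [Real.coe_toNNReal _ (h0 i)]

end PoincareAux
namespace PoincareAux

lemma chi_norm_one {Γ : Subgroup SL2Z} {χ : Γ →* ℂˣ} (hχ : HasFiniteOrderChar Γ χ) (γ : Γ) :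
    ‖(χ γ : ℂ)‖ = 1 := by
  obtain ⟨n, hn, h⟩ := hχ
  have hpow : ((χ γ : ℂ)) ^ n = 1 := by
    have h2 := congrArg (Units.val) (h γ)
    simpa using h2
  exact Complex.norm_eq_one_of_pow_eq_one hpow hn.ne'

lemma conj_chi_mul {Γ : Subgroup SL2Z} {χ : Γ →* ℂˣ} (hχ : HasFiniteOrderChar Γ χ) (γ : Γ) :
    (starRingEnd ℂ) (χ γ : ℂ) * (χ γ : ℂ) = 1 := by
  have h1 : (starRingEnd ℂ) (χ γ : ℂ) * (χ γ : ℂ) = (Complex.normSq (χ γ : ℂ) : ℂ) := by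
    rw [mul_comm, Complex.mul_conj]
  have h2 : Complex.normSq (χ γ : ℂ) = 1 := by
    rw [Complex.normSq_eq_abs]
    have := chi_norm_one hχ γ
    rw [Complex.norm_eq_abs] at this
    rw [this]; norm_num
  rw [h1, h2]; norm_num

section eta

variable {Γ : Subgroup SL2Z} {η : Γ → ℂ → ℂ}

lemma eta_sq (hη : IsMultiplierSystem Γ η) (γ : Γ) {z : ℂ} (hz : z ∈ UH) : η γ z ^ 2 = Dz (γ : SL2Z) z :=
  hη.sq γ z hz

lemma eta_ne (hη : IsMultiplierSystem Γ η) (γ : Γ) {z : ℂ} (hz : z ∈ UH) : η γ z ≠ 0 := by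
  intro h0
  apply Dz_ne_zero (γ : SL2Z) (hz : 0 < z.im)
  rw [← eta_sq hη γ hz, h0]
  ring

lemma norm_eta_zpow (hη : IsMultiplierSystem Γ η) {m : ℝ} {j : ℕ} (hm : m = 5 / 2 + j) (γ : Γ) {z : ℂ} (hz : z ∈ UH) :
    ‖η γ z ^ (-(5 + 2 * (j : ℤ)))‖ = Complex.abs (Dz (γ : SL2Z) z) ^ (-m) := by
  have hpos : 0 < ‖η γ z‖ := norm_pos_iff.2 (eta_ne hη γ hz)
  have hη2 : ‖η γ z‖ ^ 2 = Complex.abs (Dz (γ : SL2Z) z) := by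
    rw [← norm_pow, eta_sq hη γ hz, Complex.norm_eq_abs]
  have hnorm : ‖η γ z‖ = Complex.abs (Dz (γ : SL2Z) z) ^ ((1 : ℝ) / 2) := by
    rw [← Real.sqrt_eq_rpow, ← hη2, Real.sqrt_sq hpos.le]
  have hD : 0 ≤ Complex.abs (Dz (γ : SL2Z) z) := Complex.abs.nonneg _
  rw [norm_zpow, hnorm, ← Real.rpow_intCast
    (Complex.abs (Dz (γ : SL2Z) z) ^ ((1 : ℝ) / 2)) (-(5 + 2 * (j : ℤ))),
    ← Real.rpow_mul hD]
  congr 1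
  push_cast
  rw [hm]
  ring

end eta

lemma norm_fkm_le {m : ℝ} (hm0 : 0 ≤ m) (k : ℕ) {w : ℂ} (hw : 0 < w.im) :
    ‖fkm m k w‖ ≤ (2 : ℝ) ^ m * Complex.abs (w + I) ^ (-m) := by
  have hwI : 0 < (w + I).im := by simp; linarith
  have habs_pos : 0 < Complex.abs (w + I) := lt_of_lt_of_le hwI (Complex.im_le_abs _)
  have hne : w + I ≠ 0 := by
    intro h; rw [h] at hwI; simp at hwI
  have h2I : (2 * I : ℂ) ≠ 0 := by simp [Complex.I_ne_zero]
  have hc : Complex.abs ((2 * I) ^ ((m : ℝ) : ℂ)) = 2 ^ m := by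
    rw [Complex.abs_cpow_of_ne_zero h2I]
    simp [Complex.abs_two]
  have hd : Complex.abs ((w + I) ^ ((m : ℂ) + (k : ℂ))) = Complex.abs (w + I) ^ (m + (k : ℝ)) := by
    rw [Complex.abs_cpow_of_ne_zero hne]
    have hre : ((m : ℂ) + (k : ℂ)).re = m + (k : ℝ) := by simp
    have him : ((m : ℂ) + (k : ℂ)).im = 0 := by simp
    rw [hre, him]
    norm_num
  have hnum : Complex.abs (w - I) ≤ Complex.abs (w + I) := by
    rw [Complex.abs_apply, Complex.abs_apply]
    apply Real.sqrt_le_sqrt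
    rw [Complex.normSq_apply, Complex.normSq_apply]
    simp only [Complex.sub_re, Complex.sub_im, Complex.add_re, Complex.add_im,
      Complex.I_re, Complex.I_im]
    nlinarith [hw]
  have hsplit : Complex.abs (w + I) ^ (m + (k : ℝ))
      = Complex.abs (w + I) ^ m * Complex.abs (w + I) ^ k := by
    rw [Real.rpow_add habs_pos, Real.rpow_natCast]
  have hfkm : ‖fkm m k w‖
      = 2 ^ m * Complex.abs (w - I) ^ k / (Complex.abs (w + I) ^ m * Complex.abs (w + I) ^ k) := by
    rw [fkm, norm_div, norm_mul, norm_pow, Complex.norm_eq_abs, Complex.norm_eq_abs,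
      Complex.norm_eq_abs, hc, hd, hsplit]
  rw [hfkm, Real.rpow_neg habs_pos.le]
  rw [div_eq_mul_inv, mul_inv, ← mul_assoc]
  calc 2 ^ m * Complex.abs (w - I) ^ k * (Complex.abs (w + I) ^ m)⁻¹
        * (Complex.abs (w + I) ^ k)⁻¹
      ≤ 2 ^ m * Complex.abs (w + I) ^ k * (Complex.abs (w + I) ^ m)⁻¹
        * (Complex.abs (w + I) ^ k)⁻¹ := by
        gcongr
    _ = 2 ^ m * (Complex.abs (w + I) ^ m)⁻¹ := by
        have hk : (Complex.abs (w + I) ^ k) ≠ 0 := pow_ne_zero _ habs_pos.ne'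
        field_simp

lemma norm_PTerm_le {Γ : Subgroup SL2Z} {η : Γ → ℂ → ℂ} (hη : IsMultiplierSystem Γ η)
    {χ : Γ →* ℂˣ} (hχ : HasFiniteOrderChar Γ χ) {m : ℝ} {j : ℕ} (hm : m = 5 / 2 + j) (k : ℕ)
    (γ : Γ) {z : ℂ} (hz : z ∈ UH) :
    ‖PTerm Γ η χ m j k γ z‖ ≤ (2 : ℝ) ^ m * Complex.abs (Lz (γ : SL2Z) z) ^ (-m) := by
  have hz' : 0 < z.im := hz
  have hm0 : (0 : ℝ) ≤ m := by
    have : (0:ℝ) ≤ (j : ℝ) := Nat.cast_nonneg j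
    rw [hm]; linarith
  have hw : 0 < (act (γ : SL2Z) z).im := act_mem _ hz'
  have hDpos : 0 < Complex.abs (Dz (γ : SL2Z) z) :=
    Complex.abs.pos (Dz_ne_zero _ hz')
  have hLpos : 0 < Complex.abs (Lz (γ : SL2Z) z) :=
    Complex.abs.pos (Lz_ne_zero _ hz')
  have hnorm : ‖PTerm Γ η χ m j k γ z‖
      = ‖fkm m k (act (γ : SL2Z) z)‖ * Complex.abs (Dz (γ : SL2Z) z) ^ (-m) := by
    rw [PTerm, norm_mul, norm_mul, norm_eta_zpow hη hm γ hz]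
    have : ‖(starRingEnd ℂ) (χ γ : ℂ)‖ = 1 := by
      rw [RCLike.norm_conj]
      exact chi_norm_one hχ γ
    rw [this, one_mul]
  rw [hnorm]
  have hbound := norm_fkm_le hm0 k hw
  have haddI : Complex.abs (act (γ : SL2Z) z + I)
      = Complex.abs (Lz (γ : SL2Z) z) / Complex.abs (Dz (γ : SL2Z) z) := by
    rw [act_add_I _ hz', map_div₀]
  calc ‖fkm m k (act (γ : SL2Z) z)‖ * Complex.abs (Dz (γ : SL2Z) z) ^ (-m)
      ≤ (2 : ℝ) ^ m * Complex.abs (act (γ : SL2Z) z + I) ^ (-m)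
          * Complex.abs (Dz (γ : SL2Z) z) ^ (-m) := by
        apply mul_le_mul_of_nonneg_right hbound (Real.rpow_nonneg hDpos.le _)
    _ = (2 : ℝ) ^ m * Complex.abs (Lz (γ : SL2Z) z) ^ (-m) := by
        rw [haddI, Real.div_rpow hLpos.le hDpos.le, mul_assoc, div_mul_cancel₀]
        exact (Real.rpow_pos_of_pos hDpos _).ne'

lemma two_lt_m {m : ℝ} {j : ℕ} (hm : m = 5 / 2 + j) : 2 < m := by
  have : (0:ℝ) ≤ (j : ℝ) := Nat.cast_nonneg j
  rw [hm]; linarith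

lemma summable_abs_Lz {m : ℝ} (hm2 : 2 < m) {z : ℂ} (hz : 0 < z.im) :
    Summable fun γ : SL2Z => Complex.abs (Lz γ z) ^ (-m) := by
  apply summable_of_ofReal_tsum_ne_top
    (fun γ => Real.rpow_nonneg (Complex.abs.nonneg _) _)
  exact (Sen_lt_top hm2 hz).ne

lemma summable_norm_PTerm {Γ : Subgroup SL2Z} {η : Γ → ℂ → ℂ} (hη : IsMultiplierSystem Γ η)
    {χ : Γ →* ℂˣ} (hχ : HasFiniteOrderChar Γ χ) {m : ℝ} {j : ℕ} (hm : m = 5 / 2 + j) (k : ℕ)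
    {z : ℂ} (hz : z ∈ UH) :
    Summable fun γ : Γ => ‖PTerm Γ η χ m j k γ z‖ := by
  have hm2 := two_lt_m hm
  have hsub : Summable fun γ : Γ => Complex.abs (Lz (γ : SL2Z) z) ^ (-m) :=
    (summable_abs_Lz hm2 hz).comp_injective Subtype.coe_injective
  apply Summable.of_nonneg_of_le (fun γ => norm_nonneg _)
    (fun γ => norm_PTerm_le hη hχ hm k γ hz)
  exact hsub.mul_left ((2 : ℝ) ^ m)

end PoincareAux
namespace PoincareAux

lemma isOpen_UH : IsOpen UH := by
  have h : UH = Complex.im ⁻¹' Set.Ioi 0 := rfl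
  rw [h]
  exact isOpen_Ioi.preimage Complex.continuous_im

section transform

variable {Γ : Subgroup SL2Z} {η : Γ → ℂ → ℂ} {χ : Γ →* ℂˣ} {m : ℝ} {j k : ℕ}

lemma PTerm_transform (hη : IsMultiplierSystem Γ η) (hχ : HasFiniteOrderChar Γ χ)
    (γ δ : Γ) {z : ℂ} (hz : z ∈ UH) :
    PTerm Γ η χ m j k γ (act (δ : SL2Z) z) * η δ z ^ (-(5 + 2 * (j : ℤ)))
      = (χ δ : ℂ) * PTerm Γ η χ m j k (γ * δ) z := by
  have hact : act ((γ : SL2Z)) (act (δ : SL2Z) z) = act (((γ * δ : Γ) : SL2Z)) z := by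
    have : ((γ * δ : Γ) : SL2Z) = (γ : SL2Z) * (δ : SL2Z) := rfl
    rw [this]
    exact act_act _ _ hz
  have hcocycle : η (γ * δ) z = η γ (act (δ : SL2Z) z) * η δ z := hη.cocycle γ δ z hz
  have hχmul : (starRingEnd ℂ) ((χ (γ * δ) : ℂ))
      = (starRingEnd ℂ) (χ γ : ℂ) * (starRingEnd ℂ) (χ δ : ℂ) := by
    rw [map_mul χ, Units.val_mul, map_mul]
  have hχδ : (χ δ : ℂ) * (starRingEnd ℂ) (χ δ : ℂ) = 1 := by
    rw [mul_comm]; exact conj_chi_mul hχ δ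
  rw [PTerm, PTerm, hact, hcocycle, mul_zpow, hχmul]
  linear_combination (-((starRingEnd ℂ) (χ γ : ℂ) * fkm m k (act (((γ * δ : Γ) : SL2Z)) z)
    * η γ (act (δ : SL2Z) z) ^ (-(5 + 2 * (j : ℤ))) * η δ z ^ (-(5 + 2 * (j : ℤ))))) * hχδ

lemma Poincare_transform (hη : IsMultiplierSystem Γ η) (hχ : HasFiniteOrderChar Γ χ)
    (δ : Γ) {z : ℂ} (hz : z ∈ UH) :
    PoincareP Γ η χ m j k (act (δ : SL2Z) z) * η δ z ^ (-(5 + 2 * (j : ℤ)))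
      = (χ δ : ℂ) * PoincareP Γ η χ m j k z := by
  rw [PoincareP, PoincareP, ← tsum_mul_right,
    ← Equiv.tsum_eq (Equiv.mulRight δ) (fun γ => PTerm Γ η χ m j k γ z), ← tsum_mul_left]
  exact tsum_congr fun γ => PTerm_transform hη hχ γ δ hz

end transform

/-! ### Invariance of the weighted majorant sum -/

lemma Sen_term_transf {m : ℝ} (γ δ : SL2Z) {z : ℂ} (hz : 0 < z.im) :
    (act δ z).im ^ (m / 2) * Complex.abs (Lz γ (act δ z)) ^ (-m)
      = z.im ^ (m / 2) * Complex.abs (Lz (γ * δ) z) ^ (-m) := by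
  have hD := Dz_ne_zero δ hz
  have hDpos : 0 < Complex.abs (Dz δ z) := Complex.abs.pos hD
  have hL : Lz γ (act δ z) = Lz (γ * δ) z / Dz δ z := by
    rw [← Lz_comp γ δ hz, mul_div_cancel_right₀ _ hD]
  have habs : Complex.abs (Lz γ (act δ z)) ^ (-m)
      = Complex.abs (Lz (γ * δ) z) ^ (-m) * Complex.abs (Dz δ z) ^ m := by
    rw [hL, map_div₀, Real.div_rpow (Complex.abs.nonneg _) hDpos.le]
    rw [div_eq_mul_inv, Real.rpow_neg hDpos.le, inv_inv]
  have him2 : (act δ z).im ^ (m / 2) = z.im ^ (m / 2) * Complex.abs (Dz δ z) ^ (-m) := by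
    rw [act_im δ hz, ← Complex.sq_abs, Real.div_rpow hz.le (sq_nonneg _)]
    congr 1
    · rw [← Real.rpow_natCast (Complex.abs (Dz δ z)) 2, ← Real.rpow_mul hDpos.le,
        Real.rpow_neg hDpos.le]
      congr 2
      push_cast
      ring
  have hcancel : Complex.abs (Dz δ z) ^ (-m) * Complex.abs (Dz δ z) ^ m = 1 := by
    rw [← Real.rpow_add hDpos]
    simp
  rw [habs, him2, show z.im ^ (m / 2) * Complex.abs (Dz δ z) ^ (-m)
      * (Complex.abs (Lz (γ * δ) z) ^ (-m) * Complex.abs (Dz δ z) ^ m)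
      = z.im ^ (m / 2) * Complex.abs (Lz (γ * δ) z) ^ (-m)
        * (Complex.abs (Dz δ z) ^ (-m) * Complex.abs (Dz δ z) ^ m) from by ring,
    hcancel, mul_one]

/-- The weighted majorant sum `y^{m/2} Σ |L_γ(z)|^{-m}`. -/
def Wfun (m : ℝ) (z : ℂ) : ℝ≥0∞ := ENNReal.ofReal (z.im ^ (m / 2)) * Sen m z

lemma Wfun_inv {m : ℝ} (δ : SL2Z) {z : ℂ} (hz : 0 < z.im) :
    Wfun m (act δ z) = Wfun m z := by
  have hz2 : 0 < (act δ z).im := act_mem δ hz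
  rw [Wfun, Wfun, Sen, Sen, ← ENNReal.tsum_mul_left, ← ENNReal.tsum_mul_left,
    ← Equiv.tsum_eq (Equiv.mulRight δ) (fun γ => ENNReal.ofReal (z.im ^ (m / 2))
        * ENNReal.ofReal (Complex.abs (Lz γ z) ^ (-m)))]
  refine tsum_congr fun γ => ?_
  rw [← ENNReal.ofReal_mul (Real.rpow_nonneg hz2.le _),
    ← ENNReal.ofReal_mul (Real.rpow_nonneg hz.le _)]
  exact congrArg ENNReal.ofReal (Sen_term_transf γ δ hz)

end PoincareAux
namespace PoincareAux

lemma coe_smul_eq_act (g : SL2Z) (τ : UpperHalfPlane) :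
    ((g • τ : UpperHalfPlane) : ℂ) = act g (τ : ℂ) := by
  rw [UpperHalfPlane.specialLinearGroup_apply]
  simp only [UpperHalfPlane.coe_mk, act, entry, algebraMap_int_eq, eq_intCast]
  push_cast
  rfl

lemma Wfun_le_of_big {m : ℝ} (hm : 2 < m) {z : ℂ} (hz : 0 < z.im)
    (hbig : Real.sqrt 3 / 2 ≤ z.im) :
    Wfun m z ≤ ENNReal.ofReal
      (((Real.sqrt 3 / 2) ^ (-(m / 2)) + Zconst m) * Econst m) := by
  have hs3 : (0 : ℝ) < Real.sqrt 3 / 2 := by positivity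
  calc Wfun m z ≤ ENNReal.ofReal (z.im ^ (m / 2))
        * ENNReal.ofReal ((z.im ^ (-m) + Zconst m * z.im ^ (-(m / 2))) * Econst m) :=
        mul_le_mul_right (Sen_le hm hz) _
    _ = ENNReal.ofReal (z.im ^ (m / 2) * ((z.im ^ (-m) + Zconst m * z.im ^ (-(m / 2))) * Econst m)) := by
        rw [← ENNReal.ofReal_mul (Real.rpow_nonneg hz.le _)]
    _ ≤ ENNReal.ofReal (((Real.sqrt 3 / 2) ^ (-(m / 2)) + Zconst m) * Econst m) := by
        apply ENNReal.ofReal_le_ofReal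
        have h1 : z.im ^ (m / 2) * z.im ^ (-m) = z.im ^ (-(m / 2)) := by
          rw [← Real.rpow_add hz]
          congr 1
          ring
        have h2 : z.im ^ (m / 2) * z.im ^ (-(m / 2)) = 1 := by
          rw [← Real.rpow_add hz]
          simp
        have h3 : z.im ^ (-(m / 2)) ≤ (Real.sqrt 3 / 2) ^ (-(m / 2)) := by
          apply Real.rpow_le_rpow_of_nonpos hs3 hbig
          linarith
        calc z.im ^ (m / 2) * ((z.im ^ (-m) + Zconst m * z.im ^ (-(m / 2))) * Econst m)
            = (z.im ^ (m / 2) * z.im ^ (-m)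
                + Zconst m * (z.im ^ (m / 2) * z.im ^ (-(m / 2)))) * Econst m := by ring
          _ = (z.im ^ (-(m / 2)) + Zconst m) * Econst m := by rw [h1, h2, mul_one]
          _ ≤ ((Real.sqrt 3 / 2) ^ (-(m / 2)) + Zconst m) * Econst m := by
              apply mul_le_mul_of_nonneg_right _ Econst_nonneg
              linarith

lemma Poincare_bound {Γ : Subgroup SL2Z} {η : Γ → ℂ → ℂ} (hη : IsMultiplierSystem Γ η)
    {χ : Γ →* ℂˣ} (hχ : HasFiniteOrderChar Γ χ) {m : ℝ} {j : ℕ} (hm : m = 5 / 2 + j) (k : ℕ) :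
    ∃ C : ℝ, ∀ z ∈ UH, ‖PoincareP Γ η χ m j k z‖ * z.im ^ (m / 2) ≤ C := by
  have hm2 := two_lt_m hm
  set c₀ : ℝ := ((Real.sqrt 3 / 2) ^ (-(m / 2)) + Zconst m) * Econst m with hc₀def
  have hc₀ : 0 ≤ c₀ := by
    apply mul_nonneg _ Econst_nonneg
    have := Zconst_nonneg hm2
    have : (0:ℝ) ≤ (Real.sqrt 3 / 2) ^ (-(m / 2)) := Real.rpow_nonneg (by positivity) _
    positivity
  refine ⟨2 ^ m * c₀, fun z hz => ?_⟩
  have hz' : 0 < z.im := hz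
  -- move to the fundamental domain
  obtain ⟨g, hg⟩ := ModularGroup.exists_smul_mem_fd ⟨z, hz'⟩
  set τ : UpperHalfPlane := ⟨z, hz'⟩ with hτdef
  have him3 : Real.sqrt 3 / 2 ≤ (g • τ).im := by
    have h3 := ModularGroup.three_le_four_mul_im_sq_of_mem_fd hg
    have hpos : 0 < (g • τ).im := UpperHalfPlane.im_pos _
    nlinarith [Real.sq_sqrt (by norm_num : (0:ℝ) ≤ 3), Real.sqrt_nonneg 3, hpos, h3]
  have hcoe : ((g • τ : UpperHalfPlane) : ℂ) = act g z := coe_smul_eq_act g τ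
  have hzim : (act g z).im = (g • τ).im := by rw [← hcoe, UpperHalfPlane.coe_im]
  have hactpos : 0 < (act g z).im := act_mem g hz'
  have hW : Wfun m z ≤ ENNReal.ofReal c₀ := by
    rw [← Wfun_inv g hz']
    apply Wfun_le_of_big hm2 hactpos
    rw [hzim]
    exact him3
  -- real-level conversion
  have hsum := summable_norm_PTerm hη hχ hm k hz
  set S : ℝ := ∑' γ : Γ, ‖PTerm Γ η χ m j k γ z‖ with hSdef
  have hS0 : 0 ≤ S := tsum_nonneg fun γ => norm_nonneg _
  have hENN : ENNReal.ofReal (z.im ^ (m / 2) * S)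
      ≤ ENNReal.ofReal ((2 : ℝ) ^ m * c₀) := by
    have h2m : (0:ℝ) ≤ 2 ^ m := Real.rpow_nonneg (by norm_num) _
    calc ENNReal.ofReal (z.im ^ (m / 2) * S)
        = ENNReal.ofReal (z.im ^ (m / 2)) * ENNReal.ofReal S :=
          ENNReal.ofReal_mul (Real.rpow_nonneg hz'.le _)
      _ = ENNReal.ofReal (z.im ^ (m / 2))
            * ∑' γ : Γ, ENNReal.ofReal ‖PTerm Γ η χ m j k γ z‖ := by
          rw [hSdef, ENNReal.ofReal_tsum_of_nonneg (fun γ => norm_nonneg _) hsum]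
      _ ≤ ENNReal.ofReal (z.im ^ (m / 2))
            * ∑' γ : Γ, ENNReal.ofReal ((2:ℝ) ^ m * Complex.abs (Lz (γ : SL2Z) z) ^ (-m)) := by
          apply mul_le_mul_right
          exact ENNReal.tsum_le_tsum fun γ =>
            ENNReal.ofReal_le_ofReal (norm_PTerm_le hη hχ hm k γ hz)
      _ = ENNReal.ofReal (z.im ^ (m / 2)) * ∑' γ : Γ, (ENNReal.ofReal ((2:ℝ) ^ m)
            * ENNReal.ofReal (Complex.abs (Lz (γ : SL2Z) z) ^ (-m))) := by
          congr 1
          exact tsum_congr fun γ => ENNReal.ofReal_mul h2m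
      _ = ENNReal.ofReal (z.im ^ (m / 2)) * (ENNReal.ofReal ((2:ℝ) ^ m)
            * ∑' γ : Γ, ENNReal.ofReal (Complex.abs (Lz (γ : SL2Z) z) ^ (-m))) := by
          rw [ENNReal.tsum_mul_left]
      _ ≤ ENNReal.ofReal (z.im ^ (m / 2)) * (ENNReal.ofReal ((2:ℝ) ^ m) * Sen m z) := by
          apply mul_le_mul_right
          apply mul_le_mul_right
          exact ENNReal.tsum_comp_le_tsum_of_injective Subtype.coe_injective
            (fun γ => ENNReal.ofReal (Complex.abs (Lz γ z) ^ (-m)))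
      _ = ENNReal.ofReal ((2:ℝ) ^ m) * Wfun m z := by
          rw [Wfun]
          ring
      _ ≤ ENNReal.ofReal ((2:ℝ) ^ m) * ENNReal.ofReal c₀ := mul_le_mul_right hW _
      _ = ENNReal.ofReal ((2 : ℝ) ^ m * c₀) := (ENNReal.ofReal_mul h2m).symm
  have hreal : z.im ^ (m / 2) * S ≤ (2 : ℝ) ^ m * c₀ := by
    have h2m : (0:ℝ) ≤ 2 ^ m := Real.rpow_nonneg (by norm_num) _
    exact (ENNReal.ofReal_le_ofReal_iff (by positivity)).1 hENN
  have hPz : ‖PoincareP Γ η χ m j k z‖ ≤ S := norm_tsum_le_tsum_norm hsum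
  calc ‖PoincareP Γ η χ m j k z‖ * z.im ^ (m / 2)
      ≤ S * z.im ^ (m / 2) :=
        mul_le_mul_of_nonneg_right hPz (Real.rpow_nonneg hz'.le _)
    _ = z.im ^ (m / 2) * S := mul_comm _ _
    _ ≤ (2 : ℝ) ^ m * c₀ := hreal

end PoincareAux
namespace PoincareAux

lemma PTerm_diffOn {Γ : Subgroup SL2Z} {η : Γ → ℂ → ℂ} (hη : IsMultiplierSystem Γ η)
    {χ : Γ →* ℂˣ} {m : ℝ} {j k : ℕ} (γ : Γ) :
    DifferentiableOn ℂ (PTerm Γ η χ m j k γ) UH := by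
  intro z hz
  apply DifferentiableAt.differentiableWithinAt
  have hz' : 0 < z.im := hz
  have hD : Dz (γ : SL2Z) z ≠ 0 := Dz_ne_zero _ hz'
  have hact : DifferentiableAt ℂ (act (γ : SL2Z)) z := by
    apply DifferentiableAt.div
    · exact (differentiableAt_id.const_mul _).add_const _
    · exact (differentiableAt_id.const_mul _).add_const _
    · exact hD
  have hw : 0 < (act (γ : SL2Z) z).im := act_mem _ hz'
  have hbase_ne : (act (γ : SL2Z) z + I) ≠ 0 := by
    intro h0
    have : (act (γ : SL2Z) z + I).im = 0 := by rw [h0]; simp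
    simp only [Complex.add_im, Complex.I_im] at this
    linarith
  have hfkm : DifferentiableAt ℂ (fkm m k) (act (γ : SL2Z) z) := by
    have hnum : DifferentiableAt ℂ (fun w : ℂ => (2 * I) ^ ((m : ℝ) : ℂ) * (w - I) ^ k)
        (act (γ : SL2Z) z) :=
      ((differentiableAt_id.sub_const I).pow k).const_mul _
    have hden : DifferentiableAt ℂ (fun w : ℂ => (w + I) ^ ((m : ℂ) + (k : ℂ)))
        (act (γ : SL2Z) z) := by
      apply DifferentiableAt.cpow (differentiableAt_id.add_const I) (differentiableAt_const _)
      rw [Complex.mem_slitPlane_iff]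
      right
      simp only [Complex.add_im, Complex.I_im, id_eq]
      linarith
    have hden_ne : (act (γ : SL2Z) z + I) ^ ((m : ℂ) + (k : ℂ)) ≠ 0 := by
      rw [Complex.cpow_def_of_ne_zero hbase_ne]
      exact Complex.exp_ne_zero _
    exact (hnum.div hden hden_ne :)
  have hcomp : DifferentiableAt ℂ (fun z => fkm m k (act (γ : SL2Z) z)) z :=
    hfkm.comp z hact
  have heta : DifferentiableAt ℂ (fun z => η γ z ^ (-(5 + 2 * (j : ℤ)))) z := by
    have h1 : DifferentiableAt ℂ (η γ) z :=
      (hη.holo γ).differentiableAt (isOpen_UH.mem_nhds hz)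
    exact h1.zpow (Or.inl (eta_ne hη γ hz))
  exact ((hcomp.const_mul _).mul heta :)

lemma abs_Lz_compare (γ : SL2Z) {z₀ z : ℂ} (hz : 0 < z.im)
    (hball : Complex.abs (z - z₀) ≤ z.im) :
    Complex.abs (Lz γ z₀) ≤ 2 * Complex.abs (Lz γ z) := by
  have hsplit : Lz γ z₀ = Lz γ z + uC γ * (z₀ - z) := by
    rw [Lz, Lz]; ring
  have habs : Complex.abs (z₀ - z) = Complex.abs (z - z₀) := by
    rw [← Complex.abs.map_neg]; congr 1; ring
  calc Complex.abs (Lz γ z₀) ≤ Complex.abs (Lz γ z) + Complex.abs (uC γ * (z₀ - z)) := by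
        rw [hsplit]; exact Complex.abs.add_le _ _
    _ = Complex.abs (Lz γ z) + Complex.abs (uC γ) * Complex.abs (z₀ - z) := by rw [map_mul]
    _ ≤ Complex.abs (Lz γ z) + Complex.abs (uC γ) * z.im := by
        rw [habs]
        exact add_le_add_right (mul_le_mul_of_nonneg_left hball (Complex.abs.nonneg _)) _
    _ ≤ Complex.abs (Lz γ z) + Complex.abs (Lz γ z) :=
        add_le_add_right (abs_uC_mul_im_le γ hz) _
    _ = 2 * Complex.abs (Lz γ z) := by ring

lemma rpow_Lz_compare {m : ℝ} (hm0 : 0 ≤ m) (γ : SL2Z) {z₀ z : ℂ}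
    (hz₀ : 0 < z₀.im) (hz : 0 < z.im) (hball : Complex.abs (z - z₀) ≤ z.im) :
    Complex.abs (Lz γ z) ^ (-m) ≤ 2 ^ m * Complex.abs (Lz γ z₀) ^ (-m) := by
  have hL0 : 0 < Complex.abs (Lz γ z₀) := Complex.abs.pos (Lz_ne_zero _ hz₀)
  have h2L := abs_Lz_compare γ hz hball
  calc Complex.abs (Lz γ z) ^ (-m) ≤ (Complex.abs (Lz γ z₀) / 2) ^ (-m) := by
        apply Real.rpow_le_rpow_of_nonpos (by positivity) _ (by linarith)
        linarith
    _ = 2 ^ m * Complex.abs (Lz γ z₀) ^ (-m) := by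
        rw [Real.div_rpow hL0.le (by norm_num : (0:ℝ) ≤ 2), Real.rpow_neg (by norm_num : (0:ℝ) ≤ 2)]
        rw [div_eq_mul_inv, inv_inv, mul_comm]

lemma Poincare_diff {Γ : Subgroup SL2Z} {η : Γ → ℂ → ℂ} (hη : IsMultiplierSystem Γ η)
    {χ : Γ →* ℂˣ} (hχ : HasFiniteOrderChar Γ χ) {m : ℝ} {j : ℕ} (hm : m = 5 / 2 + j) (k : ℕ) :
    DifferentiableOn ℂ (PoincareP Γ η χ m j k) UH := by
  have hm2 := two_lt_m hm
  have hm0 : (0:ℝ) ≤ m := by linarith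
  intro z₀ hz₀
  have hz₀' : 0 < z₀.im := hz₀
  set r : ℝ := z₀.im / 2 with hrdef
  have hrpos : 0 < r := by rw [hrdef]; linarith
  have him_ball : ∀ z ∈ Metric.ball z₀ r, r < z.im := by
    intro z hzb
    have hd : Complex.abs (z - z₀) < r := by
      rwa [Metric.mem_ball, Complex.dist_eq] at hzb
    have habs : |z.im - z₀.im| ≤ Complex.abs (z - z₀) := by
      rw [← Complex.sub_im]
      exact Complex.abs_im_le_abs _
    have h2 := abs_lt.1 (lt_of_le_of_lt habs hd)
    rw [hrdef] at *
    linarith [h2.1]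
  have hball_sub : Metric.ball z₀ r ⊆ UH := by
    intro z hzb
    have := him_ball z hzb
    show (0:ℝ) < z.im
    linarith
  have hmaj : Summable (fun γ : Γ =>
      (2:ℝ) ^ m * ((2:ℝ) ^ m * Complex.abs (Lz (γ : SL2Z) z₀) ^ (-m))) := by
    apply Summable.mul_left
    apply Summable.mul_left
    exact (summable_abs_Lz hm2 hz₀').comp_injective Subtype.coe_injective
  have hband : ∀ (γ : Γ), ∀ z ∈ Metric.ball z₀ r, ‖PTerm Γ η χ m j k γ z‖
      ≤ (2:ℝ) ^ m * ((2:ℝ) ^ m * Complex.abs (Lz (γ : SL2Z) z₀) ^ (-m)) := by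
    intro γ z hzb
    have hz' : 0 < z.im := hball_sub hzb
    have hd : Complex.abs (z - z₀) < r := by
      rwa [Metric.mem_ball, Complex.dist_eq] at hzb
    have hball2 : Complex.abs (z - z₀) ≤ z.im := le_of_lt (lt_trans hd (him_ball z hzb))
    calc ‖PTerm Γ η χ m j k γ z‖ ≤ (2:ℝ) ^ m * Complex.abs (Lz (γ : SL2Z) z) ^ (-m) :=
          norm_PTerm_le hη hχ hm k γ (hball_sub hzb)
      _ ≤ (2:ℝ) ^ m * ((2:ℝ) ^ m * Complex.abs (Lz (γ : SL2Z) z₀) ^ (-m)) := by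
          apply mul_le_mul_of_nonneg_left _ (Real.rpow_nonneg (by norm_num) _)
          exact rpow_Lz_compare hm0 _ hz₀' hz' hball2
  have htendsto := tendstoUniformlyOn_tsum hmaj hband
  have hdiff : ∀ t : Finset Γ, DifferentiableOn ℂ
      (fun z => ∑ γ ∈ t, PTerm Γ η χ m j k γ z) (Metric.ball z₀ r) := by
    intro t
    apply DifferentiableOn.fun_sum
    intro γ _
    exact (PTerm_diffOn hη γ).mono hball_sub
  have hP : DifferentiableOn ℂ (fun z => ∑' γ : Γ, PTerm Γ η χ m j k γ z)
      (Metric.ball z₀ r) :=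
    (htendsto.tendstoLocallyUniformlyOn).differentiableOn
      (Filter.Eventually.of_forall hdiff) Metric.isOpen_ball
  have hPat : DifferentiableAt ℂ (fun z => ∑' γ : Γ, PTerm Γ η χ m j k γ z) z₀ :=
    hP.differentiableAt (Metric.isOpen_ball.mem_nhds (Metric.mem_ball_self hrpos))
  exact hPat.differentiableWithinAt

end PoincareAux
theorem stmt1 (Γ : Subgroup SL2Z) (hΓ : Γ.FiniteIndex)
    (hI : ∀ γ : Γ, ((γ : SL2Z) : Matrix (Fin 2) (Fin 2) ℤ) ≠ -1)
    (η : Γ → ℂ → ℂ) (hη : IsMultiplierSystem Γ η)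
    (χ : Γ →* ℂˣ) (hχ : HasFiniteOrderChar Γ χ)
    (m : ℝ) (j : ℕ) (hm : m = 5 / 2 + j) (k : ℕ) :
    IsCuspForm Γ η χ m j (PoincareP Γ η χ m j k) := by
  refine ⟨PoincareAux.Poincare_diff hη hχ hm k, ?_, ?_⟩
  · intro γ z hz
    exact PoincareAux.Poincare_transform hη hχ γ hz
  · exact PoincareAux.Poincare_bound hη hχ hm k
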